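/- For every i ≥ 2 and every n ≥ 1, λ_{2i+1}(n) ≤ λ_{2i}(n) ≤ 2·λ_{2i+1}(n). -/

import Mathlib

/-- `fstar f n = min {i : f^(i)(n) ≤ 1}`. -/
noncomputable def fstar (f : ℕ → ℕ) (n : ℕ) : ℕ := sInf {i | f^[i] n ≤ 1}

/-- The inverse-Ackermann-type functions: `lam 1 n = ⌊√n⌋`, `lam 2 n = ⌈log₂ n⌉`,
`lam (d) = (lam (d-2))*` for `d ≥ 3`. -/
noncomputable def lam : ℕ → ℕ → ℕ
  | 0 => fun _ => 0
  | 1 => Nat.sqrt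
  | 2 => Nat.clog 2
  | d + 3 => fstar (lam (d + 1))

/-- A "good" function: monotone, strictly decreasing on inputs `≥ 2`, and `f 1 ≤ 1`. -/
def Good (f : ℕ → ℕ) : Prop :=
  Monotone f ∧ (∀ x, 2 ≤ x → f x < x) ∧ f 1 ≤ 1

lemma Good.mono {f : ℕ → ℕ} (hf : Good f) : Monotone f := hf.1

lemma Good.le_one {f : ℕ → ℕ} (hf : Good f) {x : ℕ} (hx : x ≤ 1) : f x ≤ 1 :=
  le_trans (hf.1 hx) hf.2.2

lemma Good.iter_le_one {f : ℕ → ℕ} (hf : Good f) {x : ℕ} (hx : x ≤ 1) :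
    ∀ k, f^[k] x ≤ 1 := by
  intro k
  induction k generalizing x with
  | zero => simpa using hx
  | succ k ih =>
    rw [Function.iterate_succ_apply]
    exact ih (hf.le_one hx)

lemma Good.iter_pred_le_one {f : ℕ → ℕ} (hf : Good f) : ∀ n, f^[n - 1] n ≤ 1 := by
  intro n
  induction n using Nat.strong_induction_on with
  | _ n ih =>
    rcases le_or_gt n 1 with hn | hn
    · exact hf.iter_le_one hn _
    · have h2 : 2 ≤ n := hn
      have hfn : f n < n := hf.2.1 n h2
      have hfn' : f n ≤ n - 1 := by omega
      have : n - 1 = (n - 2) + 1 := by omega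
      rw [this, Function.iterate_succ_apply]
      have h1 : f^[n - 2] (f n) ≤ f^[n - 2] (n - 1) := hf.1.iterate (n - 2) hfn'
      have h3 : (n - 1) - 1 = n - 2 := by omega
      have h4 := ih (n - 1) (by omega)
      rw [h3] at h4
      exact le_trans h1 h4

lemma fstar_spec {f : ℕ → ℕ} (hf : Good f) (n : ℕ) : f^[fstar f n] n ≤ 1 := by
  have hne : (n - 1) ∈ {i | f^[i] n ≤ 1} := hf.iter_pred_le_one n
  exact Nat.sInf_mem ⟨n - 1, hne⟩

lemma fstar_le_of_iter {f : ℕ → ℕ} {n k : ℕ} (h : f^[k] n ≤ 1) : fstar f n ≤ k :=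
  Nat.sInf_le h

lemma iter_of_fstar_le {f : ℕ → ℕ} (hf : Good f) {n k : ℕ} (h : fstar f n ≤ k) :
    f^[k] n ≤ 1 := by
  have h1 := fstar_spec hf n
  have : f^[k] n = f^[k - fstar f n] (f^[fstar f n] n) := by
    rw [← Function.iterate_add_apply]
    congr 1
    omega
  rw [this]
  exact hf.iter_le_one h1 _

lemma fstar_le_iff {f : ℕ → ℕ} (hf : Good f) {n k : ℕ} :
    fstar f n ≤ k ↔ f^[k] n ≤ 1 :=
  ⟨iter_of_fstar_le hf, fstar_le_of_iter⟩

lemma fstar_of_le_one {f : ℕ → ℕ} {n : ℕ} (hn : n ≤ 1) : fstar f n = 0 :=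
  Nat.le_zero.mp (fstar_le_of_iter (by simpa using hn))

lemma fstar_le_pred {f : ℕ → ℕ} (hf : Good f) (n : ℕ) : fstar f n ≤ n - 1 :=
  fstar_le_of_iter (hf.iter_pred_le_one n)

lemma fstar_mono {f : ℕ → ℕ} (hf : Good f) : Monotone (fstar f) := by
  intro m n hmn
  rw [fstar_le_iff hf]
  exact le_trans (hf.1.iterate _ hmn) (fstar_spec hf n)

lemma Good.fstar {f : ℕ → ℕ} (hf : Good f) : Good (fstar f) := by
  refine ⟨fstar_mono hf, fun x hx => ?_, ?_⟩
  · have := fstar_le_pred hf x; omega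
  · rw [fstar_of_le_one le_rfl]; omega

lemma iter_le_iter {f g : ℕ → ℕ} (hf : Monotone f) (hfg : ∀ n, f n ≤ g n) :
    ∀ k n, f^[k] n ≤ g^[k] n := by
  intro k
  induction k with
  | zero => simp
  | succ k ih =>
    intro n
    rw [Function.iterate_succ_apply, Function.iterate_succ_apply]
    exact le_trans (hf.iterate k (hfg n)) (ih (g n))

lemma fstar_le_fstar {f g : ℕ → ℕ} (hf : Monotone f) (hg : Good g)
    (hfg : ∀ n, f n ≤ g n) (n : ℕ) : fstar f n ≤ fstar g n :=
  fstar_le_of_iter (le_trans (iter_le_iter hf hfg _ n) (fstar_spec hg n))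

/-- Recursion for `fstar`. -/
lemma fstar_succ {f : ℕ → ℕ} (hf : Good f) {n : ℕ} (hn : 2 ≤ n) :
    fstar f n = fstar f (f n) + 1 := by
  apply le_antisymm
  · apply fstar_le_of_iter
    rw [Function.iterate_succ_apply]
    exact fstar_spec hf (f n)
  · have hpos : 1 ≤ fstar f n := by
      by_contra h
      have h0 : fstar f n = 0 := by omega
      have := fstar_spec hf n
      rw [h0] at this
      simp at this
      omega
    have h1 := fstar_spec hf n
    have h5 : f^[(fstar f n - 1) + 1] n ≤ 1 := by
      have he : fstar f n - 1 + 1 = fstar f n := by omega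
      rw [he]; exact h1
    rw [Function.iterate_succ_apply] at h5
    have := fstar_le_of_iter h5
    omega

lemma good_sqrt : Good Nat.sqrt := by
  refine ⟨fun _ _ h => Nat.sqrt_le_sqrt h, fun x hx => Nat.sqrt_lt_self (by omega), by simp⟩

lemma good_clog : Good (Nat.clog 2) := by
  refine ⟨Nat.clog_monotone 2, fun x hx => ?_, by simp⟩
  have h1 : x ≤ 2 ^ (x - 1) := by
    have := Nat.lt_two_pow_self (n := x - 1)
    omega
  have := (Nat.clog_le_iff_le_pow (by norm_num)).mpr h1
  omega

lemma clog_lt_self {x : ℕ} (hx : 2 ≤ x) : Nat.clog 2 x < x := good_clog.2.1 x hx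

/-- `n < 2 ^ 2 ^ (sqrt* n)` for `n ≥ 1`. -/
lemma lt_pow_pow_sstar : ∀ n : ℕ, 1 ≤ n → n < 2 ^ 2 ^ (fstar Nat.sqrt n) := by
  intro n
  induction n using Nat.strong_induction_on with
  | _ n ih =>
    intro hn
    rcases le_or_gt n 1 with h1 | h1
    · have : n = 1 := by omega
      subst this
      rw [fstar_of_le_one le_rfl]
      norm_num
    · have h2 : 2 ≤ n := h1
      have hs1 : 1 ≤ Nat.sqrt n := by
        rw [Nat.le_sqrt]; omega
      have hslt : Nat.sqrt n < n := Nat.sqrt_lt_self h1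
      have IH := ih (Nat.sqrt n) hslt hs1
      have hrec : fstar Nat.sqrt n = fstar Nat.sqrt (Nat.sqrt n) + 1 :=
        fstar_succ good_sqrt h2
      rw [hrec]
      have key : n < (Nat.sqrt n + 1) * (Nat.sqrt n + 1) := Nat.lt_succ_sqrt n
      have hle : Nat.sqrt n + 1 ≤ 2 ^ 2 ^ (fstar Nat.sqrt (Nat.sqrt n)) := IH
      calc n < (Nat.sqrt n + 1) * (Nat.sqrt n + 1) := key
        _ ≤ 2 ^ 2 ^ (fstar Nat.sqrt (Nat.sqrt n)) * 2 ^ 2 ^ (fstar Nat.sqrt (Nat.sqrt n)) :=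
            Nat.mul_le_mul hle hle
        _ = 2 ^ 2 ^ (fstar Nat.sqrt (Nat.sqrt n) + 1) := by
            rw [← pow_add, pow_succ]
            ring_nf

/-- `clog (clog n) ≤ sqrt* n`. -/
lemma clog_clog_le_sstar (n : ℕ) : Nat.clog 2 (Nat.clog 2 n) ≤ fstar Nat.sqrt n := by
  rcases Nat.eq_zero_or_pos n with h | h
  · subst h; simp
  · have h1 := lt_pow_pow_sstar n h
    have h2 : Nat.clog 2 n ≤ 2 ^ (fstar Nat.sqrt n) :=
      (Nat.clog_le_iff_le_pow (by norm_num)).mpr (le_of_lt h1)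
    calc Nat.clog 2 (Nat.clog 2 n) ≤ Nat.clog 2 (2 ^ (fstar Nat.sqrt n)) :=
          Nat.clog_mono_right 2 h2
      _ = fstar Nat.sqrt n := Nat.clog_pow 2 _ (by norm_num)

/-- `sqrt* n ≤ clog n`. -/
lemma sstar_le_clog : ∀ n : ℕ, fstar Nat.sqrt n ≤ Nat.clog 2 n := by
  intro n
  induction n using Nat.strong_induction_on with
  | _ n ih =>
    rcases le_or_gt n 1 with h1 | h1
    · rw [fstar_of_le_one h1]; omega
    · have h2 : 2 ≤ n := h1
      have hrec : fstar Nat.sqrt n = fstar Nat.sqrt (Nat.sqrt n) + 1 :=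
        fstar_succ good_sqrt h2
      have hclog : Nat.clog 2 n = Nat.clog 2 ((n + 1) / 2) + 1 := by
        have := Nat.clog_of_two_le (b := 2) (n := n) (by norm_num) h2
        simpa using this
      have hsqrt_half : Nat.sqrt n ≤ (n + 1) / 2 := by
        have hs : Nat.sqrt n * Nat.sqrt n ≤ n := Nat.sqrt_le n
        have : 2 * Nat.sqrt n ≤ n + 1 := by nlinarith [Nat.sqrt_le n]
        omega
      have hlt : (n + 1) / 2 < n := by omega
      calc fstar Nat.sqrt n = fstar Nat.sqrt (Nat.sqrt n) + 1 := hrec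
        _ ≤ fstar Nat.sqrt ((n + 1) / 2) + 1 := by
            have := fstar_mono good_sqrt hsqrt_half; omega
        _ ≤ Nat.clog 2 ((n + 1) / 2) + 1 := by
            have := ih ((n + 1) / 2) hlt; omega
        _ = Nat.clog 2 n := hclog.symm

/-- If `g (2m) ≤ m` then `fstar g (2m) ≤ m`. -/
lemma fstar_two_mul {g : ℕ → ℕ} (hg : Good g) (hgm : ∀ m, g (2 * m) ≤ m) (m : ℕ) :
    fstar g (2 * m) ≤ m := by
  rcases Nat.eq_zero_or_pos m with h | h
  · subst h
    simpa using (fstar_of_le_one (f := g) (n := 0) (by norm_num)).le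
  · have h2 : 2 ≤ 2 * m := by omega
    rw [fstar_succ hg h2]
    have h3 : fstar g (g (2 * m)) ≤ fstar g m := fstar_mono hg (hgm m)
    have h4 : fstar g m ≤ m - 1 := fstar_le_pred hg m
    omega

/-- `fstar f ≤ 2 * fstar g` when two steps of `f` do one step of `g`. -/
lemma fstar_le_two_mul_fstar {f g : ℕ → ℕ} (hf : Good f) (hg : Good g)
    (h : ∀ n, f (f n) ≤ g n) (n : ℕ) : fstar f n ≤ 2 * fstar g n := by
  apply fstar_le_of_iter
  rw [Function.iterate_mul]
  have hmono : Monotone (f^[2]) := hf.1.iterate 2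
  have hle : ∀ x, f^[2] x ≤ g x := by
    intro x
    simpa [Function.iterate_succ_apply] using h x
  exact le_trans (iter_le_iter hmono hle _ n) (fstar_spec hg n)

/-- The inductive invariant, for levels `2i, 2i+1` with `i ≥ 1`. -/
def LamInv (i : ℕ) : Prop :=
  Good (lam (2 * i)) ∧ Good (lam (2 * i + 1)) ∧
  (∀ n, lam (2 * i + 1) n ≤ lam (2 * i) n) ∧
  (∀ n, lam (2 * i) (lam (2 * i) n) ≤ lam (2 * i + 1) n) ∧
  (∀ m, lam (2 * i) (2 * m) ≤ m)

lemma lam_two : lam 2 = Nat.clog 2 := rfl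
lemma lam_three : lam 3 = fstar Nat.sqrt := rfl

lemma lamInv_one : LamInv 1 := by
  have h2 : lam 2 = Nat.clog 2 := rfl
  have h3 : lam 3 = fstar Nat.sqrt := rfl
  refine ⟨by rw [show 2 * 1 = 2 by norm_num, h2]; exact good_clog,
    by rw [show 2 * 1 + 1 = 3 by norm_num, h3]; exact good_sqrt.fstar, ?_, ?_, ?_⟩
  · intro n
    rw [show 2 * 1 = 2 by norm_num, show (2 : ℕ) + 1 = 3 by norm_num, h2, h3]
    exact sstar_le_clog n
  · intro n
    rw [show 2 * 1 = 2 by norm_num, show (2 : ℕ) + 1 = 3 by norm_num, h2, h3]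
    exact clog_clog_le_sstar n
  · intro m
    rw [show 2 * 1 = 2 by norm_num, h2]
    rcases Nat.eq_zero_or_pos m with h | h
    · subst h; simp
    · rcases Nat.eq_or_lt_of_le h with h1 | h1
      · rw [← h1]; simp [Nat.clog_eq_one]
      · have h2m : 2 ≤ 2 * m := by omega
        have hrec := Nat.clog_of_two_le (b := 2) (n := 2 * m) (by norm_num) h2m
        have hdiv : (2 * m + 2 - 1) / 2 = m := by omega
        rw [hdiv] at hrec
        have hlt : Nat.clog 2 m < m := clog_lt_self (by omega)
        omega

lemma lamInv_succ {i : ℕ} (hi : 1 ≤ i) (H : LamInv i) : LamInv (i + 1) := by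
  obtain ⟨hg, hf, hle, hsq, htm⟩ := H
  set g := lam (2 * i) with hgdef
  set f := lam (2 * i + 1) with hfdef
  have e1 : lam (2 * (i + 1)) = fstar g := by
    obtain ⟨d, hd⟩ : ∃ d, 2 * i = d + 1 := ⟨2 * i - 1, by omega⟩
    rw [show 2 * (i + 1) = d + 3 by omega, hgdef, hd]
    rfl
  have e2 : lam (2 * (i + 1) + 1) = fstar f := by
    have : 2 * (i + 1) + 1 = (2 * i) + 3 := by omega
    rw [this]
    show fstar (lam (2 * i + 1)) = fstar f
    rfl
  have htm' : ∀ m, fstar g (2 * m) ≤ m := fstar_two_mul hg htm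
  refine ⟨by rw [e1]; exact hg.fstar, by rw [e2]; exact hf.fstar, ?_, ?_, ?_⟩
  · intro n
    rw [e1, e2]
    exact fstar_le_fstar hf.1 hg hle n
  · intro n
    rw [e1, e2]
    -- fstar g (fstar g n) ≤ fstar f n
    have h1 : fstar g n ≤ 2 * fstar f n := fstar_le_two_mul_fstar hg hf hsq n
    calc fstar g (fstar g n) ≤ fstar g (2 * fstar f n) := fstar_mono hg h1
      _ ≤ fstar f n := htm' _
  · intro m
    rw [e1]
    exact htm' m

lemma lamInv_all {i : ℕ} (hi : 1 ≤ i) : LamInv i := by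
  induction i with
  | zero => omega
  | succ i ih =>
    rcases Nat.eq_zero_or_pos i with h | h
    · subst h; exact lamInv_one
    · exact lamInv_succ h (ih h)

theorem stmt_18 : ∀ i : ℕ, 2 ≤ i → ∀ n : ℕ, 1 ≤ n →
    lam (2 * i + 1) n ≤ lam (2 * i) n ∧ lam (2 * i) n ≤ 2 * lam (2 * i + 1) n := by
  intro i hi n _
  obtain ⟨i', rfl⟩ : ∃ i', i = i' + 1 := ⟨i - 1, by omega⟩
  have hi' : 1 ≤ i' := by omega
  obtain ⟨hg, hf, hle, hsq, htm⟩ := lamInv_all hi'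
  have e1 : lam (2 * (i' + 1)) = fstar (lam (2 * i')) := by
    obtain ⟨d, hd⟩ : ∃ d, 2 * i' = d + 1 := ⟨2 * i' - 1, by omega⟩
    rw [show 2 * (i' + 1) = d + 3 by omega, hd]
    rfl
  have e2 : lam (2 * (i' + 1) + 1) = fstar (lam (2 * i' + 1)) := by
    have : 2 * (i' + 1) + 1 = (2 * i') + 3 := by omega
    rw [this]
    rfl
  rw [e1, e2]
  constructor
  · exact fstar_le_fstar hf.1 hg hle n
  · exact fstar_le_two_mul_fstar hg hf hsq n
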